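/- The TSD method applied to f(x) = (1/2)xᵀAx + bᵀx with A symmetric positive definite converges at least R-linearly: ‖x_k - x*‖_A ≤ c · (((κ-1)/(κ+1))^{(j-1)/j})^k for some constant c > 0 and all k, where κ = λₙ/λ₁ is the condition number of A and j ≥ 3 is the cycle parameter. -/

import Mathlib

open Matrix

private lemma sum_kant {ι : Type*} [Fintype ι] (μ a : ι → ℝ) (l L : ℝ) (hl : 0 < l)
    (hlL : l ≤ L) (hμ1 : ∀ i, l ≤ μ i) (hμn : ∀ i, μ i ≤ L) (ha : ∀ i, 0 ≤ a i) :
    4 * l * L * (∑ i, μ i ^ 2 * a i) * (∑ i, a i) ≤ (l + L) ^ 2 * (∑ i, μ i * a i) ^ 2 := by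
  set X := ∑ i, μ i ^ 2 * a i with hXdef
  set Y := ∑ i, a i with hYdef
  set Z := ∑ i, μ i * a i with hZdef
  have hX : 0 ≤ X := Finset.sum_nonneg fun i _ => mul_nonneg (sq_nonneg _) (ha i)
  have hY : 0 ≤ Y := Finset.sum_nonneg fun i _ => ha i
  have key : X + l * L * Y ≤ (l + L) * Z := by
    rw [hXdef, hYdef, hZdef, Finset.mul_sum, Finset.mul_sum, ← Finset.sum_add_distrib]
    refine Finset.sum_le_sum fun i _ => ?_
    have h1 := mul_nonneg (mul_nonneg (sub_nonneg.2 (hμ1 i)) (sub_nonneg.2 (hμn i))) (ha i)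
    nlinarith
  have h0 : 0 ≤ X + l * L * Y :=
    add_nonneg hX (mul_nonneg (mul_nonneg hl.le (hl.trans_le hlL).le) hY)
  have h2 : (X + l * L * Y) ^ 2 ≤ ((l + L) * Z) ^ 2 := pow_le_pow_left₀ h0 key 2
  nlinarith [sq_nonneg (X - l * L * Y)]

private lemma mat_kant {n : ℕ} (A : Matrix (Fin n) (Fin n) ℝ) (hA : A.PosDef)
    (lam1 lamn : ℝ) (hlam1 : 0 < lam1) (hle : lam1 ≤ lamn)
    (hR1 : ∀ v : Fin n → ℝ, lam1 * (v ⬝ᵥ v) ≤ v ⬝ᵥ (A *ᵥ v))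
    (hRn : ∀ v : Fin n → ℝ, v ⬝ᵥ (A *ᵥ v) ≤ lamn * (v ⬝ᵥ v)) (e : Fin n → ℝ) :
    4 * lam1 * lamn * ((A *ᵥ e) ⬝ᵥ (A *ᵥ (A *ᵥ e))) * (e ⬝ᵥ (A *ᵥ e))
      ≤ (lam1 + lamn) ^ 2 * ((A *ᵥ e) ⬝ᵥ (A *ᵥ e)) ^ 2 := by
  classical
  have hH := hA.isHermitian
  set U : Matrix (Fin n) (Fin n) ℝ :=
    (Matrix.IsHermitian.eigenvectorUnitary hH : Matrix (Fin n) (Fin n) ℝ) with hUdef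
  set μ : Fin n → ℝ := hH.eigenvalues with hμdef
  have hU1 : star U * U = 1 := Unitary.coe_star_mul_self _
  have hU2 : U * star U = 1 := Unitary.coe_mul_star_self _
  have hspec : A = U * Matrix.diagonal μ * star U := by
    have h := hH.spectral_theorem
    simpa using h
  have hF3 : ∀ a : Fin n → ℝ, star U *ᵥ (U *ᵥ a) = a := by
    intro a
    rw [Matrix.mulVec_mulVec, hU1, Matrix.one_mulVec]
  have hsU : star U = Uᵀ := by
    ext i k
    simp [Matrix.star_apply, Matrix.transpose_apply]
  have hF2 : ∀ a c : Fin n → ℝ, (U *ᵥ a) ⬝ᵥ (U *ᵥ c) = a ⬝ᵥ c := by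
    intro a c
    rw [dotProduct_mulVec, ← Matrix.mulVec_transpose, Matrix.mulVec_mulVec, ← hsU, hU1,
      Matrix.one_mulVec]
  -- eigenvalue bounds
  have hbound : ∀ i, lam1 ≤ μ i ∧ μ i ≤ lamn := by
    intro i
    set v : Fin n → ℝ := U *ᵥ Pi.single i 1 with hvdef
    have hvv : v ⬝ᵥ v = 1 := by
      rw [hvdef, hF2]
      simp [dotProduct, Pi.single_apply]
    have hAv : A *ᵥ v = μ i • v := by
      rw [hvdef, hspec, ← Matrix.mulVec_mulVec, hF3, ← Matrix.mulVec_mulVec,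
        Matrix.diagonal_mulVec_single]
      funext r
      simp [Matrix.mulVec_single, Pi.smul_apply]
      ring
    constructor
    · have h := hR1 v
      rw [hAv, dotProduct_smul, hvv] at h
      simpa using h
    · have h := hRn v
      rw [hAv, dotProduct_smul, hvv] at h
      simpa using h
  set c : Fin n → ℝ := star U *ᵥ e with hcdef
  have he : e = U *ᵥ c := by
    rw [hcdef, Matrix.mulVec_mulVec, hU2, Matrix.one_mulVec]
  have hAe : A *ᵥ e = U *ᵥ (Matrix.diagonal μ *ᵥ c) := by
    conv_lhs => rw [hspec, ← Matrix.mulVec_mulVec, ← Matrix.mulVec_mulVec]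
  have hAAe : A *ᵥ (A *ᵥ e) = U *ᵥ (Matrix.diagonal μ *ᵥ (Matrix.diagonal μ *ᵥ c)) := by
    rw [hAe, hspec, ← Matrix.mulVec_mulVec, hF3, ← Matrix.mulVec_mulVec]
  have hE : e ⬝ᵥ (A *ᵥ e) = ∑ i, μ i * (c i)^2 := by
    conv_lhs => rw [hAe, he]
    rw [hF2]
    simp only [dotProduct, Matrix.mulVec_diagonal]
    exact Finset.sum_congr rfl fun i _ => by ring
  have hG : (A *ᵥ e) ⬝ᵥ (A *ᵥ e) = ∑ i, μ i * (μ i * (c i)^2) := by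
    rw [hAe, hF2]
    simp only [dotProduct, Matrix.mulVec_diagonal]
    exact Finset.sum_congr rfl fun i _ => by ring
  have hT : (A *ᵥ e) ⬝ᵥ (A *ᵥ (A *ᵥ e)) = ∑ i, μ i ^ 2 * (μ i * (c i)^2) := by
    rw [hAAe, hAe, hF2]
    simp only [dotProduct, Matrix.mulVec_diagonal]
    exact Finset.sum_congr rfl fun i _ => by ring
  rw [hE, hG, hT]
  exact sum_kant μ (fun i => μ i * (c i)^2) lam1 lamn hlam1 hle
    (fun i => (hbound i).1) (fun i => (hbound i).2)
    (fun i => mul_nonneg (hlam1.le.trans (hbound i).1) (sq_nonneg _))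

private lemma count_special (j : ℕ) (hj : 0 < j) (k : ℕ) :
    j * ((Finset.range k).filter (fun i => i ≠ 0 ∧ j ∣ i)).card ≤ k := by
  classical
  have hcard : ((Finset.range k).filter (fun i => i ≠ 0 ∧ j ∣ i)).card
      ≤ (Finset.Icc 1 ((k-1)/j)).card := by
    apply Finset.card_le_card_of_injOn (fun i => i / j)
    · intro i hi
      simp only [Finset.coe_filter, Finset.mem_coe, Finset.mem_filter, Finset.mem_range, Set.mem_setOf_eq] at hi
      obtain ⟨hik, hi0, hdvd⟩ := hi
      simp only [Finset.mem_coe, Finset.mem_Icc]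
      constructor
      · rw [Nat.one_le_div_iff hj]
        exact Nat.le_of_dvd (Nat.pos_of_ne_zero hi0) hdvd
      · exact Nat.div_le_div_right (by omega)
    · intro i1 h1 i2 h2 heq
      simp only [Finset.coe_filter, Set.mem_setOf_eq, Finset.mem_range] at h1 h2
      obtain ⟨-, -, t1, rfl⟩ := h1
      obtain ⟨-, -, t2, rfl⟩ := h2
      simp only [Nat.mul_div_cancel_left _ hj] at heq
      rw [heq]
  rw [Nat.card_Icc] at hcard
  have h1 : j * ((k-1)/j) ≤ k - 1 := by
    rw [mul_comm]; exact Nat.div_mul_le_self _ _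
  calc j * ((Finset.range k).filter (fun i => i ≠ 0 ∧ j ∣ i)).card
      ≤ j * ((k-1)/j + 1 - 1) := Nat.mul_le_mul_left _ hcard
    _ = j * ((k-1)/j) := by rw [Nat.add_sub_cancel]
    _ ≤ k - 1 := h1
    _ ≤ k := Nat.sub_le _ _

private lemma rate_bound (q : ℝ) (hq0 : 0 ≤ q) (hq1 : q < 1) (j : ℕ) (hj : 3 ≤ j)
    (E : ℕ → ℝ) (hE0 : ∀ k, 0 ≤ E k)
    (hmono : ∀ k, E (k+1) ≤ E k)
    (hcauchy : ∀ k, ¬(k ≠ 0 ∧ j ∣ k) → E (k+1) ≤ q^2 * E k) :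
    ∀ k, Real.sqrt (E k) ≤ (Real.sqrt (E 0) + 1) * (q ^ (((j:ℝ)-1)/(j:ℝ)))^k := by
  classical
  have hjpos : 0 < j := by omega
  have hjR : (0:ℝ) < (j:ℝ) := by exact_mod_cast hjpos
  set m : ℕ → ℕ := fun k => ((Finset.range k).filter (fun i => ¬(i ≠ 0 ∧ j ∣ i))).card with hm
  -- energy bound via m
  have hEk : ∀ k, E k ≤ E 0 * (q^2)^(m k) := by
    intro k
    induction k with
    | zero => simp [hm]
    | succ k ih =>
      have hmsucc : ∀ hc : Prop, True := fun _ => trivial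
      by_cases hc : (k ≠ 0 ∧ j ∣ k)
      · have hmk : m (k+1) = m k := by
          simp only [hm, Finset.range_add_one, Finset.filter_insert, if_neg (not_not_intro hc)]
        rw [hmk]
        exact (hmono k).trans ih
      · have hmk : m (k+1) = m k + 1 := by
          simp only [hm, Finset.range_add_one, Finset.filter_insert, if_pos hc]
          rw [Finset.card_insert_of_notMem]
          simp [Finset.mem_filter]
        rw [hmk]
        calc E (k+1) ≤ q^2 * E k := hcauchy k hc
          _ ≤ q^2 * (E 0 * (q^2)^(m k)) := by
              apply mul_le_mul_of_nonneg_left ih (sq_nonneg q)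
          _ = E 0 * (q^2)^(m k + 1) := by ring
  -- m k ≤ k and the count bound
  have hmle : ∀ k, m k ≤ k := fun k =>
    le_trans (Finset.card_filter_le _ _) (by simp)
  have hcnt : ∀ k, j * (k - m k) ≤ k := by
    intro k
    have hsplit : ((Finset.range k).filter (fun i => i ≠ 0 ∧ j ∣ i)).card + m k = k := by
      rw [hm]
      have h := Finset.card_filter_add_card_filter_not
        (s := Finset.range k) (p := fun i => i ≠ 0 ∧ j ∣ i)
      simpa using h
    have hcs := count_special j hjpos k
    have hkm : k - m k = ((Finset.range k).filter (fun i => i ≠ 0 ∧ j ∣ i)).card := by omega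
    rw [hkm]
    exact hcs
  -- exponent comparison
  have hpow : ∀ k, q ^ (m k) ≤ (q ^ (((j:ℝ)-1)/(j:ℝ)))^k := by
    intro k
    have hexpo : 0 < ((j:ℝ)-1)/(j:ℝ) := by
      apply div_pos _ hjR
      have : (3:ℝ) ≤ (j:ℝ) := by exact_mod_cast hj
      linarith
    rcases eq_or_lt_of_le hq0 with hq | hq
    · rw [← hq, Real.zero_rpow hexpo.ne']
      cases k with
      | zero => simp [hm]
      | succ k =>
        have hm1 : 0 < m (k+1) := by
          rw [hm]
          apply Finset.card_pos.2
          exact ⟨0, by simp⟩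
        rw [zero_pow hm1.ne', zero_pow (Nat.succ_ne_zero k)]
    · have hexp1 : (((j:ℝ)-1)/(j:ℝ)) * k ≤ (m k : ℝ) := by
        have h1 := hcnt k
        have h2 := hmle k
        have h3 : (j:ℝ) * ((k:ℝ) - (m k : ℝ)) ≤ (k:ℝ) := by
          have : ((j * (k - m k) : ℕ) : ℝ) ≤ (k : ℝ) := by exact_mod_cast h1
          rw [Nat.cast_mul, Nat.cast_sub h2] at this
          exact this
        rw [div_mul_eq_mul_div, div_le_iff₀ hjR]
        nlinarith
      calc q ^ (m k) = q ^ ((m k : ℕ) : ℝ) := (Real.rpow_natCast q (m k)).symm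
        _ ≤ q ^ ((((j:ℝ)-1)/(j:ℝ)) * k) :=
            Real.rpow_le_rpow_of_exponent_ge hq hq1.le hexp1
        _ = (q ^ (((j:ℝ)-1)/(j:ℝ)))^k := by
            rw [Real.rpow_mul hq0, Real.rpow_natCast]
  intro k
  have h1 : Real.sqrt (E k) ≤ Real.sqrt (E 0) * q ^ (m k) := by
    calc Real.sqrt (E k) ≤ Real.sqrt (E 0 * (q^2)^(m k)) := Real.sqrt_le_sqrt (hEk k)
      _ = Real.sqrt (E 0) * q ^ (m k) := by
          rw [show (q^2)^(m k) = (q^(m k))^2 by ring, Real.sqrt_mul (hE0 0),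
            Real.sqrt_sq (pow_nonneg hq0 _)]
  have hr0 : 0 ≤ (q ^ (((j:ℝ)-1)/(j:ℝ)))^k := pow_nonneg (Real.rpow_nonneg hq0 _) k
  calc Real.sqrt (E k) ≤ Real.sqrt (E 0) * q ^ (m k) := h1
    _ ≤ Real.sqrt (E 0) * (q ^ (((j:ℝ)-1)/(j:ℝ)))^k :=
        mul_le_mul_of_nonneg_left (hpow k) (Real.sqrt_nonneg _)
    _ ≤ (Real.sqrt (E 0) + 1) * (q ^ (((j:ℝ)-1)/(j:ℝ)))^k := by
        apply mul_le_mul_of_nonneg_right (by linarith) hr0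

theorem tsd_r_linear_convergence {n : ℕ}
    (A : Matrix (Fin n) (Fin n) ℝ) (hA : A.PosDef) (b : Fin n → ℝ)
    (lam1 lamn : ℝ) (hlam1 : 0 < lam1) (hle : lam1 ≤ lamn)
    (hR1 : ∀ v : Fin n → ℝ, lam1 * (v ⬝ᵥ v) ≤ v ⬝ᵥ (A *ᵥ v))
    (hRn : ∀ v : Fin n → ℝ, v ⬝ᵥ (A *ᵥ v) ≤ lamn * (v ⬝ᵥ v))
    (j : ℕ) (hj : 3 ≤ j)
    (x g p : ℕ → Fin n → ℝ) (α : ℕ → ℝ)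
    (xs : Fin n → ℝ) (hxs : xs = -(A⁻¹ *ᵥ b))
    (hg : ∀ k, g k = A *ᵥ x k + b)
    (hp : ∀ k, p k = if k ≠ 0 ∧ j ∣ k
      then (-(α (k - 1))) • g (k - 1) - (α (k - 2)) • g (k - 2) else -(g k))
    (hα : ∀ k, α k = -(p k ⬝ᵥ g k) / (p k ⬝ᵥ (A *ᵥ p k)))
    (hstep : ∀ k, x (k + 1) = if g k = 0 then x k else x k + α k • p k) :
    ∃ c : ℝ, 0 < c ∧ ∀ k : ℕ,
      Real.sqrt ((x k - xs) ⬝ᵥ (A *ᵥ (x k - xs)))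
        ≤ c * ((((lamn / lam1 - 1) / (lamn / lam1 + 1)) ^
            (((j : ℝ) - 1) / (j : ℝ))) ^ k) := by
  classical
  have hdet : IsUnit A.det := hA.det_pos.ne'.isUnit
  have hAxs : A *ᵥ xs = -b := by
    rw [hxs, Matrix.mulVec_neg, Matrix.mulVec_mulVec, Matrix.mul_nonsing_inv _ hdet,
      Matrix.one_mulVec]
  have hge : ∀ k, g k = A *ᵥ (x k - xs) := by
    intro k
    rw [Matrix.mulVec_sub, hAxs, sub_neg_eq_add, ← hg]
  -- dot product basics
  have hdself : ∀ v : Fin n → ℝ, 0 ≤ v ⬝ᵥ v := fun v =>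
    Finset.sum_nonneg fun i _ => mul_self_nonneg _
  have hEnn : ∀ v : Fin n → ℝ, 0 ≤ v ⬝ᵥ (A *ᵥ v) := fun v =>
    le_trans (mul_nonneg hlam1.le (hdself v)) (hR1 v)
  have hAT : Aᵀ = A := by
    ext i k
    have h := congrFun (congrFun hA.isHermitian i) k
    simpa [Matrix.conjTranspose_apply] using h
  have hsymm : ∀ u v : Fin n → ℝ, u ⬝ᵥ (A *ᵥ v) = v ⬝ᵥ (A *ᵥ u) := by
    intro u v
    rw [dotProduct_mulVec, ← Matrix.mulVec_transpose, hAT, dotProduct_comm]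
  set q : ℝ := (lamn - lam1) / (lamn + lam1) with hqdef
  have hsum : 0 < lamn + lam1 := by linarith
  have hq0 : 0 ≤ q := div_nonneg (by linarith) hsum.le
  have hq1 : q < 1 := by
    rw [hqdef, div_lt_one hsum]; linarith
  have hbase : (lamn / lam1 - 1) / (lamn / lam1 + 1) = q := by
    have hd : 0 < lamn / lam1 := div_pos (hlam1.trans_le hle) hlam1
    rw [hqdef, div_eq_div_iff (by linarith : lamn / lam1 + 1 ≠ 0) hsum.ne']
    field_simp
  set E : ℕ → ℝ := fun k => (x k - xs) ⬝ᵥ (A *ᵥ (x k - xs)) with hEdef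
  have hE0 : ∀ k, 0 ≤ E k := fun k => hEnn _
  -- expansion of the quadratic along a step
  have hexp : ∀ (k : ℕ) (t : ℝ), (x k + t • p k - xs) ⬝ᵥ (A *ᵥ (x k + t • p k - xs))
      = E k + 2 * t * (p k ⬝ᵥ g k) + t^2 * (p k ⬝ᵥ (A *ᵥ p k)) := by
    intro k t
    have h1 : x k + t • p k - xs = (x k - xs) + t • p k := by
      abel
    rw [h1]
    rw [Matrix.mulVec_add, Matrix.mulVec_smul, dotProduct_add, add_dotProduct,
      add_dotProduct, dotProduct_smul, smul_dotProduct, smul_dotProduct, dotProduct_smul]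
    have h2 : p k ⬝ᵥ (A *ᵥ (x k - xs)) = (x k - xs) ⬝ᵥ (A *ᵥ p k) := hsymm _ _
    have h3 : p k ⬝ᵥ (A *ᵥ (x k - xs)) = p k ⬝ᵥ g k := by rw [hge]
    rw [hEdef]
    simp only [smul_eq_mul]
    rw [← h2, h3]
    ring
  -- monotone decrease at every step
  have hmono : ∀ k, E (k+1) ≤ E k := by
    intro k
    have hx1 := hstep k
    by_cases h0 : g k = 0
    · rw [if_pos h0] at hx1
      simp only [hEdef, hx1]
      exact le_refl _
    · rw [if_neg h0] at hx1
      have hEk1 : E (k+1) = E k + 2 * α k * (p k ⬝ᵥ g k) + (α k)^2 * (p k ⬝ᵥ (A *ᵥ p k)) := by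
        simp only [hEdef, hx1]
        exact hexp k (α k)
      set P := p k ⬝ᵥ g k with hP
      set Dk := p k ⬝ᵥ (A *ᵥ p k) with hDk
      have hDnn : 0 ≤ Dk := hEnn _
      rcases eq_or_lt_of_le hDnn with hD | hD
      · -- Dk = 0 forces p k = 0
        have hp0 : p k = 0 := by
          by_contra hne
          have hpp : 0 < p k ⬝ᵥ p k := by
            rcases (hdself (p k)).lt_or_eq with h | h
            · exact h
            · exact absurd (dotProduct_self_eq_zero.1 h.symm) hne
          have := hR1 (p k)
          nlinarith
        have hP0 : P = 0 := by rw [hP, hp0, zero_dotProduct]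
        rw [hEk1, hP0, ← hD]
        ring_nf
        exact le_refl _
      · have hα' : α k = -P / Dk := by rw [hα k]
        rw [hEk1, hα']
        have hh : 2 * (-P / Dk) * P + (-P / Dk)^2 * Dk = -(P^2 / Dk) := by
          field_simp
          ring
        have : E k + 2 * (-P / Dk) * P + (-P / Dk)^2 * Dk = E k - P^2 / Dk := by
          rw [add_assoc, hh]; ring
        rw [this]
        have : 0 ≤ P^2 / Dk := div_nonneg (sq_nonneg _) hD.le
        linarith
  -- Cauchy steps contract
  have hcauchy : ∀ k, ¬(k ≠ 0 ∧ j ∣ k) → E (k+1) ≤ q^2 * E k := by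
    intro k hk
    have hpk : p k = -(g k) := by rw [hp k, if_neg hk]
    have hx1 := hstep k
    by_cases h0 : g k = 0
    · rw [if_pos h0] at hx1
      have hEz : E k = 0 := by
        simp only [hEdef]
        rw [hge k] at h0
        rw [h0, dotProduct_zero]
      have hE1 : E (k+1) = E k := by
        simp only [hEdef]
        rw [hx1]
      rw [hE1, hEz, mul_zero]
    · rw [if_neg h0] at hx1
      set G := g k ⬝ᵥ g k with hG
      set Dk := g k ⬝ᵥ (A *ᵥ g k) with hDk
      have hGpos : 0 < G := by
        rcases (hdself (g k)).lt_or_eq with h | h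
        · exact h
        · exact absurd (dotProduct_self_eq_zero.1 h.symm) h0
      have hDpos : 0 < Dk := lt_of_lt_of_le (by nlinarith) (hR1 (g k))
      have hPg : p k ⬝ᵥ g k = -G := by rw [hpk, neg_dotProduct, hG]
      have hPAP : p k ⬝ᵥ (A *ᵥ p k) = Dk := by
        rw [hpk, Matrix.mulVec_neg, dotProduct_neg, neg_dotProduct, neg_neg, hDk]
      have hα' : α k = G / Dk := by
        rw [hα k, hPg, hPAP, neg_neg]
      have hEk1 : E (k+1) = E k + 2 * (G/Dk) * (-G) + (G/Dk)^2 * Dk := by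
        simp only [hEdef, hx1]
        rw [hexp k (α k), hα', hPg, hPAP]
      have hEk1' : E (k+1) = E k - G^2 / Dk := by
        rw [hEk1]
        field_simp
        ring
      -- Kantorovich
      have hkan := mat_kant A hA lam1 lamn hlam1 hle hR1 hRn (x k - xs)
      have hkan' : 4 * lam1 * lamn * Dk * E k ≤ (lam1 + lamn)^2 * G^2 := by
        rw [hDk, hG, hge k]
        exact hkan
      rw [hEk1']
      have hq2 : q^2 = (lamn - lam1)^2 / (lamn + lam1)^2 := by
        rw [hqdef, div_pow]
      rw [hq2]
      rw [div_mul_eq_mul_div, le_div_iff₀ (by positivity)]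
      have hfrac : 4 * lam1 * lamn * E k ≤ (lam1 + lamn)^2 * (G^2 / Dk) := by
        rw [mul_div_assoc', le_div_iff₀ hDpos]
        nlinarith
      have hEnn' : 0 ≤ E k := hE0 k
      nlinarith [hfrac]
  -- conclude
  refine ⟨Real.sqrt (E 0) + 1, by positivity, fun k => ?_⟩
  have := rate_bound q hq0 hq1 j hj E hE0 hmono hcauchy k
  rw [hbase]
  exact this
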